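/- Let A > 0, δ = π/A, and let π be a probability measure on ℝ supported on at most K points. Let f_π = φ * π and f_{unif,A} = φ * Unif([−A,A]). Then for every integer k with |k| ≤ 2K, 2·TV(f_{unif,A}, f_π) ≥ e^{−k²δ²/2} |1{k=0} − t_k(δ X_K)|, where X_K ~ π. -/

import Mathlib

open MeasureTheory Real Set

/-- Standard Gaussian density. -/
noncomputable def stdGaussianPDF (x : ℝ) : ℝ := (Real.sqrt (2 * π))⁻¹ * Real.exp (-x ^ 2 / 2)

/-- Convolution of the standard Gaussian density with a measure. -/
noncomputable def gaussConv (μ : Measure ℝ) (x : ℝ) : ℝ := ∫ t, stdGaussianPDF (x - t) ∂μ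

/-- Density of the convolution of a standard Gaussian with `Unif([-A,A])`. -/
noncomputable def fUnif (A x : ℝ) : ℝ :=
  ∫ t in Set.Icc (-A) A, stdGaussianPDF (x - t) * (1 / (2 * A))

lemma stdGaussian_cont : Continuous stdGaussianPDF := by
  unfold stdGaussianPDF; fun_prop

lemma stdGaussian_nonneg (x : ℝ) : 0 ≤ stdGaussianPDF x := by
  unfold stdGaussianPDF; positivity

lemma stdGaussian_integrable : Integrable stdGaussianPDF := by
  have h : Integrable (fun x : ℝ => Real.exp (-(1/2 : ℝ) * x ^ 2)) :=
    integrable_exp_neg_mul_sq (by norm_num)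
  have := h.const_mul ((Real.sqrt (2 * π))⁻¹)
  refine this.congr (Filter.Eventually.of_forall fun x => ?_)
  unfold stdGaussianPDF; ring_nf

lemma norm_cexp_I_mul (θ x : ℝ) : ‖Complex.exp (Complex.I * θ * x)‖ = 1 := by
  rw [Complex.norm_exp]
  simp [Complex.mul_re]

lemma gauss_mul_integrable (θ t : ℝ) :
    Integrable (fun x : ℝ => Complex.exp (Complex.I * θ * x) * (stdGaussianPDF (x - t) : ℂ)) := by
  have h1 : Integrable (fun x : ℝ => (stdGaussianPDF (x - t) : ℂ)) :=
    (stdGaussian_integrable.comp_sub_right t).ofReal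
  exact h1.bdd_mul ((Complex.continuous_exp.comp (by fun_prop)).aestronglyMeasurable) (Filter.Eventually.of_forall fun x => le_of_eq (norm_cexp_I_mul θ x))

lemma gauss_fourier (θ t : ℝ) :
    ∫ x : ℝ, Complex.exp (Complex.I * θ * x) * (stdGaussianPDF (x - t) : ℂ)
      = Complex.exp (Complex.I * θ * t) * (Real.exp (-θ ^ 2 / 2) : ℂ) := by
  have hshift := MeasureTheory.integral_add_right_eq_self
    (μ := volume) (fun x : ℝ => Complex.exp (Complex.I * θ * x) * (stdGaussianPDF (x - t) : ℂ)) t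
  rw [← hshift]
  have heq : ∀ x : ℝ, Complex.exp (Complex.I * θ * ((x + t : ℝ) : ℂ)) * (stdGaussianPDF (x + t - t) : ℂ)
      = Complex.exp (Complex.I * θ * t) *
        (((Real.sqrt (2 * π))⁻¹ : ℝ) * (Complex.exp (Complex.I * θ * x) *
          Complex.exp (-(1/2 : ℂ) * x ^ 2))) := by
    intro x
    have : ((x : ℝ) + t - t) = x := by ring
    rw [this]
    unfold stdGaussianPDF
    push_cast [Complex.ofReal_exp]
    rw [show Complex.I * θ * ((x : ℂ) + t) = Complex.I * θ * t + Complex.I * θ * x by ring,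
      Complex.exp_add]
    rw [show -(x : ℂ) ^ 2 / 2 = -(1/2 : ℂ) * x ^ 2 by ring]
    ring
  simp_rw [heq]
  rw [integral_const_mul, integral_const_mul, fourierIntegral_gaussian (by norm_num) (θ : ℂ)]
  have hpow : ((π : ℂ) / (1/2 : ℂ)) ^ (1/2 : ℂ) = ((Real.sqrt (2 * π) : ℝ) : ℂ) := by
    rw [show ((π : ℂ) / (1/2 : ℂ)) = ((2 * π : ℝ) : ℂ) by push_cast; ring,
      show (1/2 : ℂ) = ((1/2 : ℝ) : ℂ) by norm_num,
      ← Complex.ofReal_cpow (by positivity : (0:ℝ) ≤ 2 * π), Real.sqrt_eq_rpow]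
  rw [hpow]
  have hexp : Complex.exp (-(θ:ℂ) ^ 2 / (4 * (1/2))) = ((Real.exp (-θ ^ 2 / 2) : ℝ) : ℂ) := by
    push_cast [Complex.ofReal_exp]
    norm_num
  rw [hexp]
  have hne : ((Real.sqrt (2 * π) : ℝ) : ℂ) ≠ 0 := by
    exact_mod_cast (Real.sqrt_pos.mpr (by positivity : (0:ℝ) < 2 * π)).ne'
  rw [Complex.ofReal_inv, inv_mul_cancel_left₀ hne]

lemma J_eval (A : ℝ) (hA : 0 < A) (k : ℤ) :
    ∫ t in Icc (-A) A, Complex.exp (Complex.I * (((k : ℝ) * (π / A) : ℝ) : ℂ) * t)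
      = if k = 0 then ((2 * A : ℝ) : ℂ) else 0 := by
  set θ : ℝ := (k : ℝ) * (π / A) with hθ
  rw [MeasureTheory.integral_Icc_eq_integral_Ioc,
    ← intervalIntegral.integral_of_le (by linarith : -A ≤ A)]
  by_cases hk : k = 0
  · subst hk
    simp only [Int.cast_zero, zero_mul, hθ]
    norm_num
    ring
  · rw [if_neg hk]
    have hθ0 : θ ≠ 0 := by
      have : (k : ℝ) ≠ 0 := Int.cast_ne_zero.mpr hk
      have hπA : π / A > 0 := div_pos Real.pi_pos hA
      positivity
    have hc : Complex.I * (θ : ℂ) ≠ 0 := by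
      simp [Complex.I_ne_zero, Complex.ofReal_ne_zero, hθ0]
    have := integral_exp_mul_complex (a := -A) (b := A) hc
    rw [show (fun t : ℝ => Complex.exp (Complex.I * (θ:ℂ) * (t:ℂ)))
        = fun t : ℝ => Complex.exp ((Complex.I * (θ:ℂ)) * (t:ℂ)) by funext t; ring_nf, this]
    have hθA : θ * A = (k : ℝ) * π := by
      rw [hθ]; field_simp
    have hkey : Complex.I * (θ:ℂ) * (A:ℂ)
        = Complex.I * (θ:ℂ) * ((-A : ℝ):ℂ) + (k:ℂ) * (2 * (π:ℂ) * Complex.I) := by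
      have h2 : ((θ * A : ℝ) : ℂ) = ((k : ℝ) * π : ℝ) := by exact_mod_cast congrArg (Complex.ofReal) hθA
      push_cast at h2 ⊢
      linear_combination 2 * Complex.I * h2
    rw [hkey, Complex.exp_add, Complex.exp_int_mul_two_pi_mul_I, mul_one, sub_self, zero_div]

theorem tv_lower_bound_trig_moment
    (A : ℝ) (hA : 0 < A) (K : ℕ)
    (μ : Measure ℝ) (hμ : IsProbabilityMeasure μ)
    (s : Finset ℝ) (hcard : s.card ≤ K) (hsupp : μ (↑s : Set ℝ)ᶜ = 0)
    (k : ℤ) (hk : |k| ≤ 2 * (K : ℤ)) :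
    Real.exp (-(k : ℝ) ^ 2 * (π / A) ^ 2 / 2) *
        ‖(if k = 0 then (1 : ℂ) else 0) -
          ∫ t, Complex.exp (Complex.I * (k : ℂ) * ((π / A : ℝ) : ℂ) * (t : ℂ)) ∂μ‖ ≤
      2 * ((1 / 2) * ∫ x, |fUnif A x - gaussConv μ x|) := by
  set θ : ℝ := (k : ℝ) * (π / A) with hθdef
  -- rewrite the characteristic-function integrand
  have hθeq : (fun t : ℝ => Complex.exp (Complex.I * (k : ℂ) * ((π / A : ℝ) : ℂ) * (t : ℂ)))
      = fun t : ℝ => Complex.exp (Complex.I * (θ : ℝ) * (t : ℂ)) := by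
    funext t; push_cast [hθdef]; ring_nf
  rw [hθeq]
  set c : ℝ := 1 / (2 * A) with hcdef
  -- Fubini for the uniform part
  set F : ℝ → ℝ → ℂ := fun t x =>
    Complex.exp (Complex.I * θ * x) * (stdGaussianPDF (x - t) : ℂ) * (c : ℂ) with hF
  have hFmeas : AEStronglyMeasurable (Function.uncurry F)
      ((volume.restrict (Icc (-A) A)).prod volume) := by
    apply Continuous.aestronglyMeasurable
    apply Continuous.mul
    apply Continuous.mul
    · exact Complex.continuous_exp.comp (by fun_prop)
    · exact Complex.continuous_ofReal.comp (stdGaussian_cont.comp (by fun_prop))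
    · exact continuous_const
  have hnormF : ∀ t x : ℝ, ‖F t x‖ = stdGaussianPDF (x - t) * |c| := by
    intro t x
    rw [hF]
    simp only [norm_mul, norm_cexp_I_mul, one_mul, Complex.norm_real, Real.norm_eq_abs,
      _root_.abs_of_nonneg (stdGaussian_nonneg _)]
  have hFint : Integrable (Function.uncurry F)
      ((volume.restrict (Icc (-A) A)).prod volume) := by
    rw [integrable_prod_iff hFmeas]
    constructor
    · exact Filter.Eventually.of_forall fun t => (gauss_mul_integrable θ t).mul_const _
    · have heq : ∀ t : ℝ, (∫ x, ‖F t x‖) = (∫ x, stdGaussianPDF x) * |c| := by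
        intro t
        simp_rw [hnormF]
        rw [integral_mul_const, MeasureTheory.integral_sub_right_eq_self stdGaussianPDF t]
      exact (integrable_const _).congr (Filter.Eventually.of_forall fun t => (heq t).symm)
  have hswap := MeasureTheory.integral_integral_swap hFint
  -- identify the inner integrals
  have hinner : ∀ x : ℝ, (∫ t in Icc (-A) A, F t x)
      = Complex.exp (Complex.I * θ * x) * ((fUnif A x : ℝ) : ℂ) := by
    intro x
    have : ∀ t : ℝ, F t x
        = Complex.exp (Complex.I * θ * x) * ((stdGaussianPDF (x - t) * c : ℝ) : ℂ) := by
      intro t; rw [hF]; push_cast; ring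
    simp_rw [this]
    unfold fUnif
    rw [integral_const_mul]
    congr 1
    exact integral_ofReal
  have hIunif : (∫ x : ℝ, Complex.exp (Complex.I * θ * x) * ((fUnif A x : ℝ) : ℂ))
      = ((Real.exp (-θ ^ 2 / 2) : ℝ) : ℂ) * (if k = 0 then 1 else 0) := by
    rw [← funext hinner, ← hswap]
    have houter : ∀ t : ℝ, (∫ x : ℝ, F t x)
        = Complex.exp (Complex.I * θ * t) * ((Real.exp (-θ ^ 2 / 2) : ℝ) : ℂ) * (c : ℂ) := by
      intro t
      rw [hF]
      simp only []
      rw [integral_mul_const, gauss_fourier θ t]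
    simp_rw [houter]
    rw [integral_mul_const, integral_mul_const, J_eval A hA k]
    by_cases hk0 : k = 0
    · rw [if_pos hk0, if_pos hk0, hcdef]
      push_cast
      have h2 : (2 * (A:ℂ)) ≠ 0 := by
        refine mul_ne_zero two_ne_zero (Complex.ofReal_ne_zero.mpr hA.ne')
      rw [mul_one, mul_comm (2 * (A:ℂ)) (Complex.exp _), mul_assoc, mul_one_div, div_self h2, mul_one]
    · rw [if_neg hk0, if_neg hk0]
      ring
  have hIunifInt : Integrable (fun x : ℝ =>
      Complex.exp (Complex.I * θ * x) * ((fUnif A x : ℝ) : ℂ)) := by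
    have := hFint.integral_prod_right
    exact this.congr (Filter.Eventually.of_forall fun x => hinner x)
  -- the discrete part
  have hres : μ.restrict (↑s : Set ℝ) = μ :=
    Measure.restrict_eq_self_of_ae_mem (by
      rw [MeasureTheory.ae_iff]
      exact hsupp)
  have hsum : ∀ f : ℝ → ℂ, (∫ t, f t ∂μ) = ∑ a ∈ s, ((μ {a}).toReal : ℂ) * f a := by
    intro f
    conv_lhs => rw [← hres]
    rw [MeasureTheory.integral_finset s (f := f) (IntegrableOn.of_finite s.finite_toSet)]
    simp [smul_eq_mul, measureReal_def]
  have hgc : ∀ x : ℝ, gaussConv μ x = ∑ a ∈ s, (μ {a}).toReal * stdGaussianPDF (x - a) := by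
    intro x
    unfold gaussConv
    conv_lhs => rw [← hres]
    rw [MeasureTheory.integral_finset s (IntegrableOn.of_finite s.finite_toSet)]
    simp [smul_eq_mul, measureReal_def]
  have hgcterm : ∀ x : ℝ, Complex.exp (Complex.I * θ * x) * ((gaussConv μ x : ℝ) : ℂ)
      = ∑ a ∈ s, ((μ {a}).toReal : ℂ) *
          (Complex.exp (Complex.I * θ * x) * ((stdGaussianPDF (x - a) : ℝ) : ℂ)) := by
    intro x
    rw [hgc]
    push_cast
    rw [Finset.mul_sum]
    refine Finset.sum_congr rfl fun a _ => by ring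
  have hIconvInt : Integrable (fun x : ℝ =>
      Complex.exp (Complex.I * θ * x) * ((gaussConv μ x : ℝ) : ℂ)) := by
    refine (integrable_finset_sum s fun a _ => ?_).congr
      (Filter.Eventually.of_forall fun x => (hgcterm x).symm)
    exact (gauss_mul_integrable θ a).const_mul _
  have hIconv : (∫ x : ℝ, Complex.exp (Complex.I * θ * x) * ((gaussConv μ x : ℝ) : ℂ))
      = ((Real.exp (-θ ^ 2 / 2) : ℝ) : ℂ) *
        ∫ t, Complex.exp (Complex.I * θ * (t : ℂ)) ∂μ := by
    calc (∫ x : ℝ, Complex.exp (Complex.I * θ * x) * ((gaussConv μ x : ℝ) : ℂ))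
        = ∫ x : ℝ, ∑ a ∈ s, ((μ {a}).toReal : ℂ) *
            (Complex.exp (Complex.I * θ * x) * ((stdGaussianPDF (x - a) : ℝ) : ℂ)) := by
          simp_rw [hgcterm]
      _ = ∑ a ∈ s, ((μ {a}).toReal : ℂ) *
            ∫ x : ℝ, Complex.exp (Complex.I * θ * x) * ((stdGaussianPDF (x - a) : ℝ) : ℂ) := by
          rw [MeasureTheory.integral_finset_sum s
            (fun a _ => (gauss_mul_integrable θ a).const_mul _)]
          simp_rw [integral_const_mul]
      _ = ∑ a ∈ s, ((μ {a}).toReal : ℂ) *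
            (Complex.exp (Complex.I * θ * a) * ((Real.exp (-θ ^ 2 / 2) : ℝ) : ℂ)) := by
          simp_rw [gauss_fourier]
      _ = ((Real.exp (-θ ^ 2 / 2) : ℝ) : ℂ) *
            ∑ a ∈ s, ((μ {a}).toReal : ℂ) * Complex.exp (Complex.I * θ * a) := by
          rw [Finset.mul_sum]
          exact Finset.sum_congr rfl fun a _ => by ring
      _ = _ := by rw [hsum fun t => Complex.exp (Complex.I * θ * (t : ℂ))]
  -- combine
  have hdiff : (∫ x : ℝ, Complex.exp (Complex.I * θ * x) *
        ((fUnif A x - gaussConv μ x : ℝ) : ℂ))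
      = ((Real.exp (-θ ^ 2 / 2) : ℝ) : ℂ) *
        ((if k = 0 then (1 : ℂ) else 0) - ∫ t, Complex.exp (Complex.I * θ * (t : ℂ)) ∂μ) := by
    have : ∀ x : ℝ, Complex.exp (Complex.I * θ * x) * ((fUnif A x - gaussConv μ x : ℝ) : ℂ)
        = Complex.exp (Complex.I * θ * x) * ((fUnif A x : ℝ) : ℂ)
          - Complex.exp (Complex.I * θ * x) * ((gaussConv μ x : ℝ) : ℂ) := by
      intro x; push_cast; ring
    simp_rw [this]
    rw [integral_sub hIunifInt hIconvInt, hIunif, hIconv, mul_sub]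
  have hnormpt : ∀ x : ℝ, ‖Complex.exp (Complex.I * θ * x) *
      ((fUnif A x - gaussConv μ x : ℝ) : ℂ)‖ = |fUnif A x - gaussConv μ x| := by
    intro x
    rw [norm_mul, norm_cexp_I_mul, one_mul, Complex.norm_real, Real.norm_eq_abs]
  have hexpθ : Real.exp (-(k : ℝ) ^ 2 * (π / A) ^ 2 / 2) = Real.exp (-θ ^ 2 / 2) := by
    rw [hθdef]; ring_nf
  calc Real.exp (-(k : ℝ) ^ 2 * (π / A) ^ 2 / 2) *
        ‖(if k = 0 then (1 : ℂ) else 0) - ∫ t, Complex.exp (Complex.I * θ * (t : ℂ)) ∂μ‖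
      = ‖((Real.exp (-θ ^ 2 / 2) : ℝ) : ℂ) *
          ((if k = 0 then (1 : ℂ) else 0) - ∫ t, Complex.exp (Complex.I * θ * (t : ℂ)) ∂μ)‖ := by
        rw [norm_mul, Complex.norm_real, Real.norm_eq_abs, abs_of_pos (Real.exp_pos _), hexpθ]
    _ = ‖∫ x : ℝ, Complex.exp (Complex.I * θ * x) * ((fUnif A x - gaussConv μ x : ℝ) : ℂ)‖ := by
        rw [hdiff]
    _ ≤ ∫ x : ℝ, ‖Complex.exp (Complex.I * θ * x) * ((fUnif A x - gaussConv μ x : ℝ) : ℂ)‖ :=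
        norm_integral_le_integral_norm _
    _ = ∫ x : ℝ, |fUnif A x - gaussConv μ x| := by simp_rw [hnormpt]
    _ = 2 * ((1 / 2) * ∫ x : ℝ, |fUnif A x - gaussConv μ x|) := by ring
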